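/- (Polyak–Łojasiewicz inequality from strong convexity.) Let A ∈ ℝ^{m×n}, x^0 with A x^0 = b, and let Z ∈ ℝ^{n×n} be symmetric positive semidefinite with ker(Z) = range(A^T) and Z positive definite on ker(A). Suppose f : ℝ^n → ℝ is differentiable and satisfies f(x) ≥ f(y) + ⟨∇f(y), x−y⟩ + (σ_Z/2)(x−y)^T Z† (x−y) for all x, y ∈ x^0 + ker(A), with σ_Z > 0, and let f* = min{ f(x) : x ∈ x^0 + ker(A) }. Then for every y ∈ x^0 + ker(A), ∇f(y)^T Z ∇f(y) ≥ 2 σ_Z (f(y) − f*). -/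

import Mathlib

open Matrix

-- The Moore–Penrose pseudoinverse of a real matrix, defined via the four
-- Penrose conditions (which have a unique solution for every real matrix).
open Classical in
noncomputable def mpinv {k l : Type*} [Fintype k] [Fintype l] (B : Matrix k l ℝ) :
    Matrix l k ℝ :=
  if h : ∃ X : Matrix l k ℝ,
      B * X * B = B ∧ X * B * X = X ∧ (B * X)ᵀ = B * X ∧ (X * B)ᵀ = X * B
  then h.choose else 0

/-- `P_S = I - (AS)†(AS)`, the orthogonal projection onto `ker(AS)`. -/
noncomputable def Pmat {m n p : ℕ} (A : Matrix (Fin m) (Fin n) ℝ)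
    (S : Matrix (Fin n) (Fin p) ℝ) : Matrix (Fin p) (Fin p) ℝ :=
  1 - mpinv (A * S) * (A * S)

/-- `Z_S = S P_S (P_Sᵀ Sᵀ M S P_S)† P_Sᵀ Sᵀ`. -/
noncomputable def Zmat {m n p : ℕ} (A : Matrix (Fin m) (Fin n) ℝ)
    (M : Matrix (Fin n) (Fin n) ℝ) (S : Matrix (Fin n) (Fin p) ℝ) :
    Matrix (Fin n) (Fin n) ℝ :=
  S * Pmat A S * mpinv ((Pmat A S)ᵀ * Sᵀ * M * S * Pmat A S) * (Pmat A S)ᵀ * Sᵀ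

/-- The gradient of `f : ℝ^n → ℝ`, as a vector of partial derivatives. -/
noncomputable def gradv {n : ℕ} (f : (Fin n → ℝ) → ℝ) (x : Fin n → ℝ) : Fin n → ℝ :=
  fun i => fderiv ℝ f x (Pi.single i 1)

section Aux

open Matrix

/-- Every real symmetric (Hermitian) matrix admits a Penrose pseudoinverse. -/
lemma exists_penrose {k : Type*} [Fintype k] [DecidableEq k] {B : Matrix k k ℝ}
    (hB : B.IsHermitian) :
    ∃ X : Matrix k k ℝ,
      B * X * B = B ∧ X * B * X = X ∧ (B * X)ᵀ = B * X ∧ (X * B)ᵀ = X * B := by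
  set U : Matrix k k ℝ := (hB.eigenvectorUnitary : Matrix k k ℝ) with hUdef
  set d : k → ℝ := hB.eigenvalues with hddef
  have hstar : star U = Uᵀ := by
    rw [Matrix.star_eq_conjTranspose, Matrix.conjTranspose_eq_transpose_of_trivial]
  have hU1 : star U * U = 1 := by
    rw [hUdef]; exact Unitary.coe_star_mul_self _
  have hBspec : B = U * diagonal d * star U := by
    have := hB.spectral_theorem
    simpa using this
  have key : ∀ e f : k → ℝ,
      (U * diagonal e * star U) * (U * diagonal f * star U)
        = U * diagonal (e * f) * star U := by
    intro e f
    have h : (U * diagonal e * star U) * (U * diagonal f * star U)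
        = U * diagonal e * (star U * U) * diagonal f * star U := by
      simp only [Matrix.mul_assoc]
    rw [h, hU1, Matrix.mul_one, Matrix.mul_assoc U, diagonal_mul_diagonal]
    rfl
  have hsym : ∀ e : k → ℝ, (U * diagonal e * star U)ᵀ = U * diagonal e * star U := by
    intro e
    rw [hstar]
    simp [Matrix.transpose_mul, Matrix.diagonal_transpose, Matrix.mul_assoc]
  refine ⟨U * diagonal (fun i => (d i)⁻¹) * star U, ?_, ?_, ?_, ?_⟩
  · rw [hBspec, key, key]
    have : (d * fun i => (d i)⁻¹) * d = d := by
      funext i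
      rcases eq_or_ne (d i) 0 with h | h
      · simp [h]
      · simp only [Pi.mul_apply]; rw [mul_inv_cancel₀ h, one_mul]
    rw [this]
  · rw [hBspec, key, key]
    have : ((fun i => (d i)⁻¹) * d) * (fun i => (d i)⁻¹) = fun i => (d i)⁻¹ := by
      funext i
      rcases eq_or_ne (d i) 0 with h | h
      · simp [h]
      · simp only [Pi.mul_apply]; rw [inv_mul_cancel₀ h, one_mul]
    rw [this]
  · rw [hBspec, key, hsym]
  · rw [hBspec, key, hsym]

/-- The four Penrose conditions hold for `mpinv B` when `B` is real symmetric. -/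
lemma mpinv_penrose {k : Type*} [Fintype k] [DecidableEq k] {B : Matrix k k ℝ}
    (hB : B.IsHermitian) :
    B * mpinv B * B = B ∧ mpinv B * B * mpinv B = mpinv B ∧
      (B * mpinv B)ᵀ = B * mpinv B ∧ (mpinv B * B)ᵀ = mpinv B * B := by
  have h := exists_penrose hB
  rw [mpinv, dif_pos h]
  exact h.choose_spec

lemma symm_dot {k : Type*} [Fintype k] {M : Matrix k k ℝ} (hM : Mᵀ = M)
    (a b : k → ℝ) : (M *ᵥ a) ⬝ᵥ b = a ⬝ᵥ (M *ᵥ b) := by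
  rw [Matrix.dotProduct_mulVec, ← Matrix.mulVec_transpose, hM, dotProduct_comm]

end Aux

/-- strong convexity relative to `Z†` implies the
Polyak–Łojasiewicz inequality `‖∇f(y)‖_Z² ≥ 2σ_Z (f(y) − f*)`. -/
theorem stmt10 {m n : ℕ} (A : Matrix (Fin m) (Fin n) ℝ) (b : Fin m → ℝ)
    (x0 : Fin n → ℝ) (hx0 : A.mulVec x0 = b)
    (Z : Matrix (Fin n) (Fin n) ℝ) (hZ : Z.PosSemidef)
    (hker : ∀ u : Fin n → ℝ, Z.mulVec u = 0 ↔ ∃ y : Fin m → ℝ, Aᵀ.mulVec y = u)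
    (hpd : ∀ u : Fin n → ℝ, A.mulVec u = 0 → u ≠ 0 → 0 < u ⬝ᵥ Z.mulVec u)
    (f : (Fin n → ℝ) → ℝ) (hdiff : Differentiable ℝ f)
    (σZ : ℝ) (hσ : 0 < σZ)
    (hsc : ∀ x y : Fin n → ℝ, A.mulVec x = b → A.mulVec y = b →
      f x ≥ f y + gradv f y ⬝ᵥ (x - y) +
        (σZ / 2) * ((x - y) ⬝ᵥ (mpinv Z).mulVec (x - y)))
    (fstar : ℝ) (hfs : ∀ x : Fin n → ℝ, A.mulVec x = b → fstar ≤ f x)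
    (hfattained : ∃ xs : Fin n → ℝ, A.mulVec xs = b ∧ f xs = fstar)
    (y : Fin n → ℝ) (hy : A.mulVec y = b) :
    gradv f y ⬝ᵥ Z.mulVec (gradv f y) ≥ 2 * σZ * (f y - fstar) := by
  classical
  obtain ⟨xs, hxs, hfxs⟩ := hfattained
  set g := gradv f y with hg
  have hZsym : Zᵀ = Z := by
    rw [← Matrix.conjTranspose_eq_transpose_of_trivial]
    exact hZ.1
  obtain ⟨p1, p2, p3, p4⟩ := mpinv_penrose hZ.1
  set X := mpinv Z with hX
  -- Z * Aᵀ = 0 and A * Z = 0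
  have hcol : ∀ j, Z.mulVec (fun i => Aᵀ i j) = 0 := by
    intro j
    refine (hker _).2 ⟨Pi.single j 1, ?_⟩
    funext i
    simp [Matrix.mulVec_single]
  have hZAt : Z * Aᵀ = 0 := by
    ext i j
    have := congrFun (hcol j) i
    simpa [Matrix.mul_apply, Matrix.mulVec, dotProduct] using this
  have hAZ : A * Z = 0 := by
    have h0 : (Z * Aᵀ)ᵀ = 0 := by rw [hZAt]; simp
    rwa [Matrix.transpose_mul, Matrix.transpose_transpose, hZsym] at h0
  set v := xs - y with hv
  have hAv : A.mulVec v = 0 := by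
    rw [hv, Matrix.mulVec_sub, hxs, hy, sub_self]
  have hZZX : Z * (Z * X) = Z := by
    calc Z * (Z * X) = ((Z * X) * Z)ᵀ := by
          rw [Matrix.transpose_mul, p3, hZsym]
      _ = Zᵀ := by rw [p1]
      _ = Z := hZsym
  -- v is fixed by Z * X
  have hfix : (Z * X).mulVec v = v := by
    set w := v - (Z * X).mulVec v with hw
    have hZw : Z.mulVec w = 0 := by
      have h1 : Z.mulVec ((Z * X).mulVec v) = Z.mulVec v := by
        rw [Matrix.mulVec_mulVec, hZZX]
      rw [hw, Matrix.mulVec_sub, h1, sub_self]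
    obtain ⟨yw, hyw⟩ := (hker w).1 hZw
    have hAw : A.mulVec w = 0 := by
      have h1 : A.mulVec ((Z * X).mulVec v) = 0 := by
        rw [Matrix.mulVec_mulVec, ← Matrix.mul_assoc, hAZ, Matrix.zero_mul,
          Matrix.zero_mulVec]
      rw [hw, Matrix.mulVec_sub, hAv, h1, sub_self]
    have hww : w ⬝ᵥ w = 0 := by
      calc w ⬝ᵥ w = (Aᵀ *ᵥ yw) ⬝ᵥ w := by rw [hyw]
        _ = (yw ᵥ* A) ⬝ᵥ w := by rw [Matrix.mulVec_transpose]
        _ = yw ⬝ᵥ (A *ᵥ w) := by rw [Matrix.dotProduct_mulVec]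
        _ = 0 := by rw [hAw, dotProduct_zero]
    have hw0 : w = 0 := dotProduct_self_eq_zero.mp hww
    have : v - (Z * X).mulVec v = 0 := by rw [← hw]; exact hw0
    have := sub_eq_zero.mp this
    exact this.symm
  set u := X.mulVec v with hu
  have hvZu : v = Z.mulVec u := by
    rw [hu, Matrix.mulVec_mulVec]; exact hfix.symm
  have hh := hsc xs y hxs hy
  rw [hfxs, ← hg, ← hv] at hh
  have e1 : v ⬝ᵥ X.mulVec v = u ⬝ᵥ Z.mulVec u := by
    calc v ⬝ᵥ X.mulVec v = (Z.mulVec u) ⬝ᵥ X.mulVec v := by rw [← hvZu]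
      _ = u ⬝ᵥ Z.mulVec (X.mulVec v) := symm_dot hZsym u _
      _ = u ⬝ᵥ (Z * X).mulVec v := by rw [Matrix.mulVec_mulVec]
      _ = u ⬝ᵥ v := by rw [hfix]
      _ = u ⬝ᵥ Z.mulVec u := by rw [← hvZu]
  have e2 : g ⬝ᵥ v = (Z.mulVec g) ⬝ᵥ u := by
    rw [hvZu, ← symm_dot hZsym g u]
  have hpsd : 0 ≤ (g + σZ • u) ⬝ᵥ Z.mulVec (g + σZ • u) := by
    have := hZ.dotProduct_mulVec_nonneg (g + σZ • u)
    simpa using this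
  have hexp : (g + σZ • u) ⬝ᵥ Z.mulVec (g + σZ • u)
      = g ⬝ᵥ Z.mulVec g + 2 * σZ * ((Z.mulVec g) ⬝ᵥ u) + σZ ^ 2 * (u ⬝ᵥ Z.mulVec u) := by
    have h1 : g ⬝ᵥ Z.mulVec u = Z.mulVec g ⬝ᵥ u := (symm_dot hZsym g u).symm
    have h2 : u ⬝ᵥ Z.mulVec g = Z.mulVec g ⬝ᵥ u := dotProduct_comm _ _
    simp only [Matrix.mulVec_add, Matrix.mulVec_smul, dotProduct_add,
      add_dotProduct, dotProduct_smul, smul_dotProduct,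
      smul_eq_mul]
    rw [h1, h2]; ring
  have hstep : 2 * σZ * (f y - fstar)
      ≤ 2 * σZ * (-(g ⬝ᵥ v) - σZ / 2 * (v ⬝ᵥ X.mulVec v)) := by
    have h1 : f y - fstar ≤ -(g ⬝ᵥ v) - σZ / 2 * (v ⬝ᵥ X.mulVec v) := by linarith
    have h2 : (0:ℝ) ≤ 2 * σZ := by linarith
    exact mul_le_mul_of_nonneg_left h1 h2
  have hre : 2 * σZ * (-(g ⬝ᵥ v) - σZ / 2 * (v ⬝ᵥ X.mulVec v))
      = g ⬝ᵥ Z.mulVec g - (g + σZ • u) ⬝ᵥ Z.mulVec (g + σZ • u) := by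
    rw [e1, e2, hexp]; ring
  linarith [hstep, hpsd, hre]
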